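/- Let G be a group, A a division ring equipped with an action of G by ring automorphisms, and V a left A-module equipped with an additive G-action satisfying g•(a·v) = (g•a)·(g•v) for all g ∈ G, a ∈ A, v ∈ V. Let χ : G → Aut_A(V) be a group homomorphism into the group of A-linear automorphisms of V, and set V_χ = {w ∈ V | g•w = χ(g)(w) for all g ∈ G}. Then V_χ is a module over the fixed division ring A^G, and every family of elements of V_χ that is left linearly independent over A^G remains left linearly independent over A; equivalently, the natural map A ⊗_{A^G} V_χ → V is injective. In particular (taking χ to be trivial), the natural map A ⊗_{A^G} V^G → V is injective. -/

import Mathlib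

/-- The multiplicative group structure on `V ≃+ V` (composition), which older Mathlib
provided as `AddAut.group`; current Mathlib makes `AddAut` an additive group instead. -/
instance addEquivSelfMulGroup (V : Type*) [Add V] : Group (V ≃+ V) where
  mul g h := AddEquiv.trans h g
  one := AddEquiv.refl _
  inv := AddEquiv.symm
  mul_assoc _ _ _ := rfl
  one_mul _ := rfl
  mul_one _ := rfl
  inv_mul_cancel := AddEquiv.self_trans_symm

/-- **Linear independence of twisted invariants (Lemma `inject`).**  `A` is a
division ring with an action `act` of a group `G` by ring automorphisms, `V` is
a left `A`-module with a compatible additive `G`-action `ρ`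
(`hcompat : ρ g (a • v) = act g a • ρ g v`), and `χ : G → Aut_A(V)` is a second
`G`-action by `A`-linear automorphisms.  Let
`V_χ = {w | ∀ g, ρ g w = χ g w}`.  Then `V_χ` is a module over the fixed
division ring `A^G` (it contains `0` and is closed under addition and under
scalars from `A^G`), and every family of elements of `V_χ` which is left
linearly independent over `A^G` remains left linearly independent over `A`. -/
theorem twisted_invariants_linearIndependent
    (G : Type) [Group G] (A : Type) [DivisionRing A]
    (act : G →* (A ≃+* A))
    (V : Type) [AddCommGroup V] [Module A V]
    (ρ : G →* (V ≃+ V))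
    (hcompat : ∀ (g : G) (a : A) (v : V), ρ g (a • v) = act g a • ρ g v)
    (χ : G →* (V ≃ₗ[A] V)) :
    -- `V_χ` is an `A^G`-submodule of `V`
    ((0 : V) ∈ {w : V | ∀ g : G, ρ g w = χ g w} ∧
     (∀ w₁ w₂ : V, w₁ ∈ {w : V | ∀ g : G, ρ g w = χ g w} →
        w₂ ∈ {w : V | ∀ g : G, ρ g w = χ g w} →
        w₁ + w₂ ∈ {w : V | ∀ g : G, ρ g w = χ g w}) ∧
     (∀ a : A, (∀ g : G, act g a = a) →
        ∀ w ∈ {w : V | ∀ g : G, ρ g w = χ g w},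
          a • w ∈ {w : V | ∀ g : G, ρ g w = χ g w})) ∧
    -- `A^G`-linearly independent families in `V_χ` are `A`-linearly independent;
    -- equivalently, the natural map `A ⊗_{A^G} V_χ → V` is injective
    (∀ (ι : Type) (w : ι → V),
      (∀ i : ι, w i ∈ {w : V | ∀ g : G, ρ g w = χ g w}) →
      (∀ (s : Finset ι) (c : ι → A), (∀ i : ι, ∀ g : G, act g (c i) = c i) →
        ∑ i ∈ s, c i • w i = 0 → ∀ i ∈ s, c i = 0) →
      LinearIndependent A w) := by
  classical
  constructor
  · refine ⟨?_, ?_, ?_⟩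
    · intro g; simp
    · intro w₁ w₂ h₁ h₂ g; simp [map_add, h₁ g, h₂ g]
    · intro a ha w hw g
      rw [hcompat g a w, ha g, hw g]
      exact (map_smul (χ g) a w).symm
  · intro ι w hw hfix
    rw [linearIndependent_iff']
    intro s
    induction s using Finset.strongInductionOn with
    | _ s ih =>
      intro c hc
      by_contra hcon
      push_neg at hcon
      obtain ⟨i₀, hi₀s, hi₀⟩ := hcon
      set c' : ι → A := fun i => (c i₀)⁻¹ * c i with hc'
      have hci₀ : c' i₀ = 1 := inv_mul_cancel₀ hi₀
      have hrel : ∑ i ∈ s, c' i • w i = 0 := by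
        simp only [hc', mul_smul]
        rw [← Finset.smul_sum, hc, smul_zero]
      have hrelg : ∀ g : G, ∑ i ∈ s, (act g (c' i)) • w i = 0 := by
        intro g
        have h1 : ρ g (∑ i ∈ s, c' i • w i)
            = χ g (∑ i ∈ s, act g (c' i) • w i) := by
          rw [map_sum, map_sum]
          refine Finset.sum_congr rfl fun i _ => ?_
          rw [hcompat, hw i g, map_smul]
        rw [hrel, map_zero] at h1
        exact (χ g).injective (h1.symm.trans (map_zero (χ g)).symm)
      have hdiff : ∀ g : G,
          ∑ i ∈ s.erase i₀, (act g (c' i) - c' i) • w i = 0 := by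
        intro g
        have h2 : ∑ i ∈ s, (act g (c' i) - c' i) • w i = 0 := by
          simp only [sub_smul]
          rw [Finset.sum_sub_distrib, hrelg g, hrel, sub_zero]
        rw [Finset.sum_erase]
        · exact h2
        · rw [hci₀, map_one, sub_self, zero_smul]
      have hfixed : ∀ i ∈ s, ∀ g : G, act g (c' i) = c' i := by
        intro i hi g
        rcases eq_or_ne i i₀ with rfl | hne
        · rw [hci₀, map_one]
        · have := ih (s.erase i₀) (Finset.erase_ssubset hi₀s)
            (fun j => act g (c' j) - c' j) (hdiff g) i
            (Finset.mem_erase.mpr ⟨hne, hi⟩)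
          exact sub_eq_zero.mp this
      set c'' : ι → A := fun i => if i ∈ s then c' i else 0 with hc''
      have hfix'' : ∀ i : ι, ∀ g : G, act g (c'' i) = c'' i := by
        intro i g
        by_cases hi : i ∈ s
        · simp only [hc'', if_pos hi]; exact hfixed i hi g
        · simp [hc'', if_neg hi]
      have hrel'' : ∑ i ∈ s, c'' i • w i = 0 := by
        rw [← hrel]
        exact Finset.sum_congr rfl fun i hi => by rw [hc'']; simp [if_pos hi]
      have := hfix s c'' hfix'' hrel'' i₀ hi₀s
      rw [hc''] at this
      simp only [if_pos hi₀s] at this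
      rw [hci₀] at this
      exact one_ne_zero this
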